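/- Let n ≥ 2, k a field, and let \mathring{g} = exp(∑_{j=2}^{n} E_{1j})·w₁ ∈ GLₙ(k)/Q be the distinguished coset, where w₁ is the permutation matrix of the transposition (1 n) and Q is the mirabolic subgroup. Then the stabilizer of \mathring{g} in the diagonal torus T of GLₙ (acting by left multiplication on GLₙ/Q) is trivial. -/

import Mathlib

open Matrix

/-- Let `n = N+2 ≥ 2` and `\mathring{g} = (I + ∑_{j≠1} E_{1j})·w₁` where `w₁` is the
permutation matrix of the transposition `(1 n)`.  The stabilizer in the diagonal torus `T`
of the coset `\mathring{g}·Q` in `GLₙ/Q` (with `Q` the mirabolic subgroup) is trivial: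
if `t·\mathring{g} = \mathring{g}·q` for some mirabolic `q`, then `t = 1`. -/
theorem stab_T_of_generic_mirabolic_coset_trivial (k : Type*) [Field k] (N : ℕ)
    (w₁ : Matrix (Fin (N + 2)) (Fin (N + 2)) k)
    (hw₁ : w₁ = Matrix.of fun i j =>
      if j = Equiv.swap (0 : Fin (N + 2)) (Fin.last (N + 1)) i then 1 else 0)
    (mg : Matrix (Fin (N + 2)) (Fin (N + 2)) k)
    (hmg : mg = (1 + ∑ j ∈ Finset.univ.filter (fun j : Fin (N + 2) => j ≠ 0),
        Matrix.single 0 j (1 : k)) * w₁)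
    (t : Fin (N + 2) → kˣ)
    (ht : ∃ q : Matrix (Fin (N + 2)) (Fin (N + 2)) k, IsUnit q ∧
      (∀ j, q (Fin.last (N + 1)) j = if j = Fin.last (N + 1) then 1 else 0) ∧
      Matrix.diagonal (fun i => (t i : k)) * mg = mg * q) :
    ∀ i, t i = 1 := by
  obtain ⟨q, -, hqlast, heq⟩ := ht
  set L : Fin (N + 2) := Fin.last (N + 1) with hL
  set σ : Equiv.Perm (Fin (N + 2)) := Equiv.swap (0 : Fin (N + 2)) L with hσ
  have hL0 : L ≠ 0 := by simp [hL, Fin.ext_iff]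
  have hσσ : ∀ m, σ (σ m) = m := fun m => Equiv.swap_apply_self _ _ m
  have hσ0 : σ 0 = L := Equiv.swap_apply_left _ _
  have hσL : σ L = 0 := Equiv.swap_apply_right _ _
  have hσne0 : ∀ m, m ≠ L → σ m ≠ 0 := by
    intro m hm h
    exact hm (by rw [← hσσ m, h, hσ0])
  have hσneL : ∀ m, m ≠ 0 → σ m ≠ L := by
    intro m hm h
    exact hm (by rw [← hσσ m, h, hσL])
  -- entries of mg
  have hmg' : ∀ i j, mg i j = if i = 0 then 1 else if j = σ i then 1 else 0 := by
    intro i j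
    subst hmg hw₁
    rw [Matrix.mul_apply]
    have hw : ∀ l, (Matrix.of fun i j =>
        if j = Equiv.swap (0 : Fin (N + 2)) (Fin.last (N + 1)) i then (1:k) else 0) l j
        = if l = σ j then 1 else 0 := by
      intro l
      simp only [Matrix.of_apply]
      congr 1
      simp only [eq_iff_iff]
      constructor
      · intro h; rw [h, hσ, hσσ]
      · intro h; rw [h]; exact (hσσ j).symm
    rw [← hL, ← hσ] at hw
    simp only [hw, mul_ite, mul_one, mul_zero, Finset.sum_ite_eq', Finset.mem_univ, if_true]
    simp only [Matrix.add_apply, Matrix.one_apply, Matrix.sum_apply, Matrix.single,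
      Matrix.of_apply]
    by_cases hi : i = 0
    · subst hi
      by_cases hj : σ j = 0
      · simp [hj]
      · rw [Finset.sum_eq_single (σ j)]
        · simp [hj, Ne.symm hj]
        · intro b hb hne; simp [hne]
        · intro h; simp [hj] at h
    · have hz : ∀ b ∈ Finset.univ.filter (fun j : Fin (N+2) => j ≠ 0),
          (if 0 = i ∧ b = σ j then (1:k) else 0) = 0 := by
        intro b _
        exact if_neg (fun h => hi h.1.symm)
      rw [Finset.sum_congr rfl hz, Finset.sum_const_zero, add_zero]
      have hiff : (i = σ j) = (j = σ i) := by
        simp only [eq_iff_iff]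
        constructor
        · intro h; rw [h, hσσ]
        · intro h; rw [h, hσσ]
      simp [hi, hiff]
  -- entrywise equation
  have key : ∀ i j, (t i : k) * mg i j = ∑ l, mg i l * q l j := by
    intro i j
    have h := congrFun (congrFun heq i) j
    simp only [Matrix.mul_apply, Matrix.diagonal_apply, ite_mul, zero_mul,
      Finset.sum_ite_eq, Finset.mem_univ, if_true] at h
    exact h
  -- q entries for rows ≠ last
  have hq : ∀ m j, m ≠ L → q m j = (t (σ m) : k) * (if j = m then 1 else 0) := by
    intro m j hm
    have hσm0 : σ m ≠ 0 := hσne0 m hm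
    have h := key (σ m) j
    have hsum : ∑ l, mg (σ m) l * q l j = q m j := by
      rw [Finset.sum_congr rfl (fun l _ => by rw [hmg' (σ m) l])]
      simp only [if_neg hσm0, hσσ]
      rw [Finset.sum_eq_single m]
      · simp
      · intro b _ hb; simp [hb]
      · intro h; exact absurd (Finset.mem_univ _) h
    rw [hsum, hmg' (σ m) j, if_neg hσm0, hσσ] at h
    exact h.symm
  -- row 0 equation : t 0 equals each column sum of q
  have hrow0 : ∀ j, (t 0 : k) = ∑ l, q l j := by
    intro j
    have h := key 0 j
    rw [hmg' 0 j, if_pos rfl, mul_one] at h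
    rw [h]
    refine Finset.sum_congr rfl fun l _ => ?_
    rw [hmg' 0 l]
    simp
  -- column sum at j = L is 1
  have ht0 : (t 0 : k) = 1 := by
    rw [hrow0 L, Finset.sum_eq_single L]
    · simp [hqlast]
    · intro b _ hb
      rw [hq b L hb]
      rw [if_neg (fun h : L = b => hb h.symm), mul_zero]
    · intro h; exact absurd (Finset.mem_univ _) h
  -- for m ≠ 0 : t 0 = t m
  have htm : ∀ m, m ≠ 0 → (t m : k) = 1 := by
    intro m hm
    have hσmL : σ m ≠ L := hσneL m hm
    have h : (t 0 : k) = t m := by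
      rw [hrow0 (σ m), Finset.sum_eq_single (σ m)]
      · rw [hq (σ m) (σ m) hσmL]; simp [hσσ]
      · intro b _ hb
        by_cases hbL : b = L
        · subst hbL; rw [hqlast]
          exact if_neg (fun h : σ m = L => hσmL h)
        · rw [hq b (σ m) hbL]
          rw [if_neg (fun h : σ m = b => hb h.symm), mul_zero]
      · intro h; exact absurd (Finset.mem_univ _) h
    rw [← h, ht0]
  intro i
  ext
  by_cases hi : i = 0
  · subst hi; simpa using ht0
  · simpa using htm i hi
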